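/- (SMDCT V discrete orthogonality) Let N, n ≥ 1 and let k, k' ∈ D_N^+, i.e., integer vectors with N−1 ≥ k_1 ≥ k_2 ≥ … ≥ k_n ≥ 0 and N−1 ≥ k'_1 ≥ … ≥ k'_n ≥ 0. Then Σ_{r ∈ D_N^+} (∏_{i=1}^n c_{r_i}) · H_r^{−1} · cos⁺_k(2r_1/(2N−1), …, 2r_n/(2N−1)) · cos⁺_{k'}(2r_1/(2N−1), …, 2r_n/(2N−1)) = (H_k / d_k) · ((2N−1)/4)^n · δ_{k,k'}. -/

import Mathlib

open Real Finset

/-- The symmetric multivariate cosine function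
`cos⁺_λ(x) = Σ_{σ ∈ S_n} ∏_{i=1}^n cos(π λ_{σ(i)} x_i)`. -/
noncomputable def cosPlus (n : ℕ) (lam x : Fin n → ℝ) : ℝ :=
  ∑ σ : Equiv.Perm (Fin n), ∏ i : Fin n, Real.cos (Real.pi * lam (σ i) * x i)

/-- The coefficient `c_r`: `1/2` if `r = 0` or `r = N`, and `1` otherwise. -/
noncomputable def cc (N r : ℕ) : ℝ := if r = 0 ∨ r = N then 1 / 2 else 1

/-- `H_k`, the order of the stabilizer of `k` under the permutation action of `S_n`
(where `σ(k)_i = k_{σ(i)}`, i.e. `σ(k) = k ∘ σ`). -/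
def Hstab {n : ℕ} {α : Type*} [DecidableEq α] (k : Fin n → α) : ℕ :=
  (Finset.univ.filter fun σ : Equiv.Perm (Fin n) => k ∘ σ = k).card

/-! ### Auxiliary lemmas: one-dimensional orthogonality -/

lemma sum_cos_eq_zero (M : ℕ) (m : ℤ) (hM : 0 < M) (hm : ¬ ((M:ℤ) ∣ m)) :
    ∑ s ∈ Finset.range M, Real.cos (2 * π * m / M * s) = 0 := by
  have hMR : (M:ℝ) ≠ 0 := Nat.cast_ne_zero.mpr hM.ne'
  set θ : ℝ := 2 * π * m / M with hθ
  have hz : Complex.exp (θ * Complex.I) ≠ 1 := by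
    intro h
    rw [Complex.exp_eq_one_iff] at h
    obtain ⟨j, hj⟩ := h
    have hI : (Complex.I : ℂ) ≠ 0 := Complex.I_ne_zero
    have h2 : (θ : ℂ) = j * (2 * π) := by
      apply mul_right_cancel₀ hI
      rw [hj]; ring
    have h3 : θ = j * (2 * π) := by exact_mod_cast h2
    have h4 : (m : ℝ) = j * M := by
      have hpi : (2 * π : ℝ) ≠ 0 := by positivity
      rw [hθ] at h3
      field_simp at h3
      apply mul_left_cancel₀ hpi
      linear_combination (2 * π) * h3
    have hmj : m = j * M := by exact_mod_cast h4
    exact hm ⟨j, by rw [hmj, mul_comm]⟩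
  have key : ∑ s ∈ range M, Complex.exp (θ * Complex.I) ^ s = 0 := by
    rw [geom_sum_eq hz]
    have hpow : Complex.exp (θ * Complex.I) ^ M = 1 := by
      rw [← Complex.exp_nat_mul]
      have hMC : (M:ℂ) ≠ 0 := Nat.cast_ne_zero.mpr hM.ne'
      have hθc : (θ:ℂ) = 2 * π * m / M := by rw [hθ]; push_cast; ring
      have : (M:ℂ) * (↑θ * Complex.I) = m * (2 * π * Complex.I) := by
        rw [hθc]; field_simp
      rw [this, Complex.exp_int_mul_two_pi_mul_I]
    rw [hpow]; simp
  have h5 : ∀ s : ℕ, (Complex.exp (θ * Complex.I) ^ s).re = Real.cos (θ * s) := by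
    intro s
    rw [← Complex.exp_nat_mul]
    have : (s:ℂ) * (↑θ * Complex.I) = (↑(θ * s) : ℂ) * Complex.I := by push_cast; ring
    rw [this, Complex.exp_ofReal_mul_I_re]
  calc ∑ s ∈ range M, Real.cos (2 * π * m / M * s)
      = (∑ s ∈ range M, Complex.exp (θ * Complex.I) ^ s).re := by
        rw [Complex.re_sum]
        exact Finset.sum_congr rfl fun s _ => (h5 s).symm
    _ = 0 := by rw [key]; rfl

lemma cc_ne_zero (N r : ℕ) : cc N r ≠ 0 := by unfold cc; split <;> norm_num

lemma step1 (N : ℕ) (hN : 1 ≤ N) (θ : ℝ) :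
    ∑ r : Fin N, cc N r * Real.cos (θ * r) =
      (∑ r ∈ Finset.range N, Real.cos (θ * r)) - 1/2 := by
  rw [Fin.sum_univ_eq_sum_range (fun j => cc N j * Real.cos (θ * j))]
  have h : ∀ r ∈ Finset.range N, cc N r * Real.cos (θ * r)
      = Real.cos (θ * r) - (if r = 0 then (1:ℝ)/2 else 0) := by
    intro r hr
    rw [Finset.mem_range] at hr
    by_cases h0 : r = 0
    · subst h0; simp [cc]; norm_num
    · have : ¬ (r = 0 ∨ r = N) := by omega
      simp only [cc, if_neg this, if_neg h0]; ring
  rw [Finset.sum_congr rfl h, Finset.sum_sub_distrib]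
  congr 1
  rw [Finset.sum_ite_eq' (Finset.range N) 0 (fun _ => (1:ℝ)/2)]
  simp [Finset.mem_range, hN]
  omega

lemma step2 (N : ℕ) (hN : 1 ≤ N) (m : ℤ) :
    ∑ s ∈ Finset.range (2*N - 1), Real.cos (2 * π * m / (2*(N:ℝ)-1) * s) =
      2 * (∑ r ∈ Finset.range N, Real.cos (2 * π * m / (2*(N:ℝ)-1) * r)) - 1 := by
  have hc0 : (2*(N:ℝ)-1) ≠ 0 := by
    have : (1:ℝ) ≤ N := by exact_mod_cast hN
    linarith
  set θ : ℝ := 2 * π * m / (2*(N:ℝ)-1) with hθ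
  set g : ℕ → ℝ := fun j => Real.cos (θ * ((j:ℝ)+1)) with hg
  have hsplit : 2*N - 1 = N + (N - 1) := by omega
  rw [hsplit, Finset.sum_range_add]
  have h2 : ∀ i ∈ Finset.range (N-1), Real.cos (θ * (↑(N + i))) = g (N - 1 - 1 - i) := by
    intro i hi
    rw [Finset.mem_range] at hi
    rw [hg]
    have hcast : ((N - 1 - 1 - i : ℕ) : ℝ) + 1 = (N:ℝ) - 1 - i := by
      have h1 : N - 1 - 1 - i = N - (2 + i) := by omega
      rw [h1, Nat.cast_sub (by omega : 2 + i ≤ N)]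
      push_cast; ring
    simp only [hcast]
    have harg : θ * ((N:ℝ) + i) = (m : ℝ) * (2 * π) - θ * ((N:ℝ) - 1 - i) := by
      have h5 : θ * (2*(N:ℝ)-1) = m * (2 * π) := by
        rw [hθ]; field_simp
      nlinarith [h5]
    have hc2 : ((N + i : ℕ) : ℝ) = (N:ℝ) + i := by push_cast; ring
    rw [hc2, harg, Real.cos_int_mul_two_pi_sub]
  rw [Finset.sum_congr rfl h2, Finset.sum_range_reflect g (N-1)]
  have h3 : ∑ j ∈ Finset.range (N-1), g j =
      (∑ r ∈ Finset.range N, Real.cos (θ * r)) - 1 := by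
    have hNs : N = (N - 1) + 1 := by omega
    rw [hNs, Finset.sum_range_succ' (fun r => Real.cos (θ * r)) (N-1)]
    push_cast
    simp [hg]
  rw [h3]; ring

lemma sum_cc_cos (N : ℕ) (hN : 1 ≤ N) (m : ℤ) (hm : m.natAbs < 2*N - 1) :
    ∑ r : Fin N, cc N r * Real.cos (2 * π * m / (2*(N:ℝ)-1) * r) =
      if m = 0 then (2*(N:ℝ)-1)/2 else 0 := by
  rw [step1 N hN]
  by_cases hm0 : m = 0
  · subst hm0
    simp only [if_pos rfl]
    have : ∀ r ∈ Finset.range N, Real.cos (2 * π * (0:ℤ) / (2*(N:ℝ)-1) * r) = 1 := by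
      intro r _; push_cast; simp
    rw [Finset.sum_congr rfl this]
    simp
    push_cast
    ring
  · rw [if_neg hm0]
    have hdvd : ¬ (((2*N-1 : ℕ):ℤ) ∣ m) := by
      intro hd
      have h1 : (2*N-1 : ℕ) ∣ m.natAbs := by
        have := Int.natAbs_dvd_natAbs.mpr hd
        simpa using this
      have h2 := Nat.le_of_dvd (Int.natAbs_pos.mpr hm0) h1
      omega
    have hz := sum_cos_eq_zero (2*N-1) m (by omega) hdvd
    have hcast : ((2*N-1 : ℕ):ℝ) = 2*(N:ℝ)-1 := by
      rw [Nat.cast_sub (by omega : 1 ≤ 2*N)]; push_cast; ring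
    rw [hcast] at hz
    rw [step2 N hN m] at hz
    linarith

lemma oneD (N : ℕ) (hN : 1 ≤ N) (a b : ℕ) (ha : a ≤ N-1) (hb : b ≤ N-1) :
    ∑ x : Fin N, cc N x *
        (Real.cos (π * (a:ℝ) * (2 * ((x:ℕ):ℝ) / (2*(N:ℝ)-1))) *
         Real.cos (π * (b:ℝ) * (2 * ((x:ℕ):ℝ) / (2*(N:ℝ)-1)))) =
      if a = b then (2*(N:ℝ)-1)/4 * (cc N a)⁻¹ else 0 := by
  have hc0 : (2*(N:ℝ)-1) ≠ 0 := by
    have : (1:ℝ) ≤ N := by exact_mod_cast hN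
    linarith
  have key : ∀ x : Fin N,
      Real.cos (π * (a:ℝ) * (2 * ((x:ℕ):ℝ) / (2*(N:ℝ)-1))) *
        Real.cos (π * (b:ℝ) * (2 * ((x:ℕ):ℝ) / (2*(N:ℝ)-1)))
      = (Real.cos (2 * π * (((a:ℤ)-(b:ℤ) : ℤ):ℝ) / (2*(N:ℝ)-1) * (x:ℕ))
          + Real.cos (2 * π * (((a:ℤ)+(b:ℤ) : ℤ):ℝ) / (2*(N:ℝ)-1) * (x:ℕ))) / 2 := by
    intro x
    have hid : ∀ u v : ℝ, Real.cos u * Real.cos v = (Real.cos (u - v) + Real.cos (u + v)) / 2 := by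
      intro u v; rw [Real.cos_sub, Real.cos_add]; ring
    rw [hid]
    congr 2
    · push_cast; field_simp
    · push_cast; field_simp
  simp only [key]
  have hsum : ∑ x : Fin N, cc N x *
      ((Real.cos (2 * π * (((a:ℤ)-(b:ℤ) : ℤ):ℝ) / (2*(N:ℝ)-1) * (x:ℕ))
        + Real.cos (2 * π * (((a:ℤ)+(b:ℤ) : ℤ):ℝ) / (2*(N:ℝ)-1) * (x:ℕ))) / 2)
      = ((∑ x : Fin N, cc N x * Real.cos (2 * π * (((a:ℤ)-(b:ℤ) : ℤ):ℝ) / (2*(N:ℝ)-1) * (x:ℕ)))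
        + (∑ x : Fin N, cc N x * Real.cos (2 * π * (((a:ℤ)+(b:ℤ) : ℤ):ℝ) / (2*(N:ℝ)-1) * (x:ℕ)))) / 2 := by
    rw [← Finset.sum_add_distrib, Finset.sum_div]
    exact Finset.sum_congr rfl fun x _ => by ring
  rw [hsum, sum_cc_cos N hN ((a:ℤ)-(b:ℤ)) (by omega), sum_cc_cos N hN ((a:ℤ)+(b:ℤ)) (by omega)]
  by_cases hab : a = b
  · subst hab
    rw [if_pos rfl, if_pos (by omega : (a:ℤ) - (a:ℤ) = 0)]
    by_cases ha0 : a = 0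
    · subst ha0
      rw [if_pos (by omega)]
      simp [cc]
      ring
    · rw [if_neg (by omega)]
      have : ¬ (a = 0 ∨ a = N) := by omega
      simp only [cc, if_neg this]
      norm_num
      ring
  · rw [if_neg hab, if_neg (by omega : ¬ ((a:ℤ) - (b:ℤ) = 0)),
      if_neg (by omega : ¬ ((a:ℤ) + (b:ℤ) = 0))]
    norm_num

/-! ### Auxiliary lemmas: sorting and orbit counting -/

lemma Hstab_pos {n : ℕ} {α : Type*} [DecidableEq α] (k : Fin n → α) : 0 < Hstab k := by
  apply Finset.card_pos.mpr
  exact ⟨1, by simp [Finset.mem_filter]⟩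

section Sorting

variable {n : ℕ} {α : Type*} [LinearOrder α]

/-- The decreasing rearrangement of a tuple. -/
noncomputable def sortD (r : Fin n → α) : Fin n → α :=
  r ∘ Tuple.sort (OrderDual.toDual ∘ r)

lemma antitone_sortD (r : Fin n → α) : Antitone (sortD r) := by
  have h := Tuple.monotone_sort (OrderDual.toDual ∘ r)
  intro i j hij
  exact h hij

lemma sortD_eq_self {r : Fin n → α} (h : Antitone r) : sortD r = r := by
  have hm : Monotone (OrderDual.toDual ∘ r) := fun i j hij => h hij
  have : Tuple.sort (OrderDual.toDual ∘ r) = Equiv.refl _ :=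
    Tuple.sort_eq_refl_iff_monotone.mpr hm
  simp [sortD, this]

lemma sortD_comp (r : Fin n → α) (σ : Equiv.Perm (Fin n)) :
    sortD (r ∘ σ) = sortD r := by
  have h := Tuple.comp_perm_comp_sort_eq_comp_sort (σ := σ) (f := OrderDual.toDual ∘ r)
  funext i
  exact congrFun h i

lemma exists_comp_sortD (r : Fin n → α) : ∃ σ : Equiv.Perm (Fin n), r = sortD r ∘ σ := by
  refine ⟨(Tuple.sort (OrderDual.toDual ∘ r))⁻¹, ?_⟩
  funext i
  simp [sortD]

lemma card_eq_stab {β : Type*} [DecidableEq β] (d : Fin n → β) (σ₀ : Equiv.Perm (Fin n)) :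
    (Finset.univ.filter fun σ : Equiv.Perm (Fin n) => d ∘ σ = d ∘ σ₀).card = Hstab d := by
  unfold Hstab
  apply Finset.card_bij' (fun σ _ => σ * σ₀⁻¹) (fun σ _ => σ * σ₀)
  · intro σ hσ
    rw [Finset.mem_filter] at hσ ⊢
    refine ⟨Finset.mem_univ _, ?_⟩
    funext i
    have := congrFun hσ.2 (σ₀⁻¹ i)
    simpa using this
  · intro σ hσ
    rw [Finset.mem_filter] at hσ ⊢
    refine ⟨Finset.mem_univ _, ?_⟩
    funext i
    have := congrFun hσ.2 (σ₀ i)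
    simpa using this
  · intro σ _; simp [mul_assoc]
  · intro σ _; simp [mul_assoc]

lemma card_fiber_mul_Hstab [DecidableEq α] [Fintype α]
    (d : Fin n → α) (hd : Antitone d) :
    (Finset.univ.filter fun r : Fin n → α => sortD r = d).card * Hstab d = n.factorial := by
  classical
  have himg : (Finset.univ.filter fun r : Fin n → α => sortD r = d)
      = Finset.univ.image (fun σ : Equiv.Perm (Fin n) => d ∘ σ) := by
    ext r
    simp only [Finset.mem_filter, Finset.mem_univ, true_and, Finset.mem_image]
    constructor
    · intro h
      obtain ⟨σ, hσ⟩ := exists_comp_sortD r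
      exact ⟨σ, by rw [← h]; exact hσ.symm⟩
    · rintro ⟨σ, rfl⟩
      rw [sortD_comp]
      exact sortD_eq_self hd
  rw [himg]
  have hcard := Finset.card_eq_sum_card_image (fun σ : Equiv.Perm (Fin n) => d ∘ σ)
    (Finset.univ : Finset (Equiv.Perm (Fin n)))
  have hfib : ∀ y ∈ Finset.univ.image (fun σ : Equiv.Perm (Fin n) => d ∘ σ),
      (Finset.univ.filter fun σ : Equiv.Perm (Fin n) => d ∘ σ = y).card = Hstab d := by
    rintro y hy
    rw [Finset.mem_image] at hy
    obtain ⟨σ₀, _, rfl⟩ := hy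
    exact card_eq_stab d σ₀
  rw [Finset.sum_congr rfl hfib, Finset.sum_const, smul_eq_mul] at hcard
  rw [← hcard]
  simp [Fintype.card_perm]

lemma key_sum [DecidableEq α] [Fintype α] (P : (Fin n → α) → Prop) [DecidablePred P]
    (hP : ∀ r, P r ↔ Antitone r) (F : (Fin n → α) → ℝ)
    (hsym : ∀ (r : Fin n → α) (σ : Equiv.Perm (Fin n)), F (r ∘ σ) = F r) :
    ∑ r ∈ Finset.univ.filter P, ((Hstab r : ℝ))⁻¹ * F r
      = ((n.factorial : ℝ))⁻¹ * ∑ r : Fin n → α, F r := by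
  classical
  have h1 : ∀ r : Fin n → α, F r = F (sortD r) := by
    intro r
    obtain ⟨σ, hσ⟩ := exists_comp_sortD r
    conv_lhs => rw [hσ]
    exact hsym _ σ
  have hmaps : ∀ r : Fin n → α, r ∈ Finset.univ → sortD r ∈ Finset.univ.filter P := by
    intro r _
    rw [Finset.mem_filter]
    exact ⟨Finset.mem_univ _, (hP _).mpr (antitone_sortD r)⟩
  have h2 : ∑ r : Fin n → α, F r
      = ∑ d ∈ Finset.univ.filter P,
          (((Finset.univ.filter fun r : Fin n → α => sortD r = d).card : ℝ)) * F d := by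
    rw [← Finset.sum_fiberwise_of_maps_to hmaps F]
    apply Finset.sum_congr rfl
    intro d _
    rw [Finset.sum_congr rfl (fun r hr => ?_), Finset.sum_const, nsmul_eq_mul]
    rw [Finset.mem_filter] at hr
    rw [h1 r, hr.2]
  rw [h2, Finset.mul_sum]
  apply Finset.sum_congr rfl
  intro d hd
  have hanti := (hP d).mp (Finset.mem_filter.mp hd).2
  have hcH := card_fiber_mul_Hstab d hanti
  have hfact : ((n.factorial : ℕ) : ℝ) ≠ 0 := by positivity
  have hH : ((Hstab d : ℕ) : ℝ) ≠ 0 := by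
    have := Hstab_pos d; positivity
  have hreal : (((Finset.univ.filter fun r : Fin n → α => sortD r = d).card : ℝ))
      * ((Hstab d : ℕ) : ℝ) = ((n.factorial : ℕ) : ℝ) := by
    exact_mod_cast congrArg (Nat.cast (R := ℝ)) hcH
  have hcard0 : (((Finset.univ.filter fun r : Fin n → α => sortD r = d).card : ℕ) : ℝ) ≠ 0 := by
    intro h
    rw [h, zero_mul] at hreal
    exact hfact hreal.symm
  rw [← hreal]
  field_simp

lemma pair_count [DecidableEq α] (k k' : Fin n → α) (hk : Antitone k) (hk' : Antitone k') :
    ∑ σ : Equiv.Perm (Fin n), ∑ τ : Equiv.Perm (Fin n),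
        (if k ∘ σ = k' ∘ τ then (1:ℝ) else 0)
      = if k = k' then ((n.factorial : ℕ) : ℝ) * Hstab k else 0 := by
  classical
  by_cases hkk : k = k'
  · subst hkk
    rw [if_pos rfl]
    have houter : ∀ σ : Equiv.Perm (Fin n),
        ∑ τ : Equiv.Perm (Fin n), (if k ∘ σ = k ∘ τ then (1:ℝ) else 0)
          = ((Hstab k : ℕ) : ℝ) := by
      intro σ
      have hswap : ∀ τ : Equiv.Perm (Fin n),
          (if k ∘ σ = k ∘ τ then (1:ℝ) else 0) = (if k ∘ τ = k ∘ σ then (1:ℝ) else 0) := by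
        intro τ
        simp only [eq_comm]
      rw [Finset.sum_congr rfl fun τ _ => hswap τ, Finset.sum_boole]
      exact_mod_cast congrArg (Nat.cast (R := ℝ)) (card_eq_stab k σ)
    rw [Finset.sum_congr rfl (fun σ _ => houter σ), Finset.sum_const, nsmul_eq_mul]
    simp [Fintype.card_perm]
  · rw [if_neg hkk]
    apply Finset.sum_eq_zero
    intro σ _
    apply Finset.sum_eq_zero
    intro τ _
    rw [if_neg]
    intro h
    apply hkk
    have h2 : sortD (k ∘ σ) = sortD (k' ∘ τ) := by rw [h]
    rwa [sortD_comp, sortD_comp, sortD_eq_self hk, sortD_eq_self hk'] at h2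

end Sorting

lemma cosPlus_comp (n : ℕ) (lam x : Fin n → ℝ) (σ : Equiv.Perm (Fin n)) :
    cosPlus n lam (x ∘ σ) = cosPlus n lam x := by
  unfold cosPlus
  refine Fintype.sum_equiv (Equiv.mulRight σ⁻¹) _ _ (fun τ => ?_)
  simp only [Equiv.coe_mulRight]
  rw [← Equiv.prod_comp σ (fun i => Real.cos (π * lam ((τ * σ⁻¹) i) * x i))]
  apply Finset.prod_congr rfl
  intro i _
  simp [Equiv.Perm.mul_apply, Function.comp]

theorem SMDCT_V_orthogonality (n N : ℕ) (hn : 1 ≤ n) (hN : 1 ≤ N)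
    (k k' : Fin n → ℕ)
    (hk : ∀ i j : Fin n, i ≤ j → k j ≤ k i) (hkb : ∀ i, k i ≤ N - 1)
    (hk' : ∀ i j : Fin n, i ≤ j → k' j ≤ k' i) (hk'b : ∀ i, k' i ≤ N - 1) :
    ∑ r ∈ Finset.univ.filter
        (fun r : Fin n → Fin N => ∀ i j : Fin n, i ≤ j → (r j : ℕ) ≤ (r i : ℕ)),
      (∏ i : Fin n, cc N (r i)) * ((Hstab r : ℝ))⁻¹ *
        cosPlus n (fun i => (k i : ℝ))
          (fun i => 2 * ((r i : ℕ) : ℝ) / (2 * N - 1)) *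
        cosPlus n (fun i => (k' i : ℝ))
          (fun i => 2 * ((r i : ℕ) : ℝ) / (2 * N - 1))
      = (Hstab k : ℝ) / (∏ i : Fin n, cc N (k i)) * ((2 * (N : ℝ) - 1) / 4) ^ n *
          (if k = k' then (1 : ℝ) else 0) := by
  classical
  set F : (Fin n → Fin N) → ℝ := fun r =>
    (∏ i : Fin n, cc N (r i)) *
      cosPlus n (fun i => (k i : ℝ)) (fun i => 2 * ((r i : ℕ) : ℝ) / (2 * (N:ℝ) - 1)) *
      cosPlus n (fun i => (k' i : ℝ)) (fun i => 2 * ((r i : ℕ) : ℝ) / (2 * (N:ℝ) - 1))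
    with hFdef
  have hstep0 : ∑ r ∈ Finset.univ.filter
        (fun r : Fin n → Fin N => ∀ i j : Fin n, i ≤ j → (r j : ℕ) ≤ (r i : ℕ)),
      (∏ i : Fin n, cc N (r i)) * ((Hstab r : ℝ))⁻¹ *
        cosPlus n (fun i => (k i : ℝ)) (fun i => 2 * ((r i : ℕ) : ℝ) / (2 * N - 1)) *
        cosPlus n (fun i => (k' i : ℝ)) (fun i => 2 * ((r i : ℕ) : ℝ) / (2 * N - 1))
      = ∑ r ∈ Finset.univ.filter
        (fun r : Fin n → Fin N => ∀ i j : Fin n, i ≤ j → (r j : ℕ) ≤ (r i : ℕ)),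
          ((Hstab r : ℝ))⁻¹ * F r := by
    apply Finset.sum_congr rfl
    intro r _
    rw [hFdef]
    ring
  rw [hstep0]
  have hP : ∀ r : Fin n → Fin N,
      (∀ i j : Fin n, i ≤ j → (r j : ℕ) ≤ (r i : ℕ)) ↔ Antitone r := by
    intro r
    constructor
    · intro h i j hij
      exact Fin.mk_le_mk.mpr (h i j hij)
    · intro h i j hij
      exact h hij
  have hsym : ∀ (r : Fin n → Fin N) (σ : Equiv.Perm (Fin n)), F (r ∘ σ) = F r := by
    intro r σ
    show (∏ i : Fin n, cc N (r (σ i))) *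
      cosPlus n (fun i => (k i : ℝ)) ((fun i => 2 * ((r i : ℕ) : ℝ) / (2 * (N:ℝ) - 1)) ∘ σ) *
      cosPlus n (fun i => (k' i : ℝ)) ((fun i => 2 * ((r i : ℕ) : ℝ) / (2 * (N:ℝ) - 1)) ∘ σ) = F r
    rw [cosPlus_comp, cosPlus_comp, Equiv.prod_comp σ (fun i => cc N (r i))]
  rw [key_sum _ hP F hsym]
  -- Now compute the full sum ∑ r, F r
  set c : ℝ := 2 * (N:ℝ) - 1 with hc
  have hF : ∀ r : Fin n → Fin N, F r =
      ∑ σ : Equiv.Perm (Fin n), ∑ τ : Equiv.Perm (Fin n),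
        ∏ i : Fin n, (cc N (r i) *
          (Real.cos (π * ((k (σ i)) : ℝ) * (2 * ((r i : ℕ) : ℝ) / (2 * (N:ℝ) - 1))) *
           Real.cos (π * ((k' (τ i)) : ℝ) * (2 * ((r i : ℕ) : ℝ) / (2 * (N:ℝ) - 1))))) := by
    intro r
    simp only [hFdef]
    unfold cosPlus
    beta_reduce
    rw [mul_assoc, Finset.sum_mul_sum]
    simp only [Finset.mul_sum]
    refine Finset.sum_congr rfl fun σ _ => Finset.sum_congr rfl fun τ _ => ?_
    rw [← Finset.prod_mul_distrib, ← Finset.prod_mul_distrib]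

  have hfull : ∑ r : Fin n → Fin N, F r =
      ∑ σ : Equiv.Perm (Fin n), ∑ τ : Equiv.Perm (Fin n),
        (if k ∘ σ = k' ∘ τ then (1:ℝ) else 0) *
          ((c/4) ^ n * (∏ i : Fin n, cc N (k i))⁻¹) := by
    rw [Finset.sum_congr rfl fun r _ => hF r]
    rw [Finset.sum_comm]
    apply Finset.sum_congr rfl
    intro σ _
    rw [Finset.sum_comm]
    apply Finset.sum_congr rfl
    intro τ _
    have hpi : ∀ g : Fin n → Fin N → ℝ,
        ∑ r : Fin n → Fin N, ∏ i : Fin n, g i (r i) = ∏ i : Fin n, ∑ x : Fin N, g i x := by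
      intro g
      rw [← Fintype.piFinset_univ]
      exact Finset.sum_prod_piFinset Finset.univ g
    have hfact : ∑ r : Fin n → Fin N,
        ∏ i : Fin n, (cc N (r i) *
          (Real.cos (π * ((k (σ i)) : ℝ) * (2 * ((r i : ℕ) : ℝ) / (2 * (N:ℝ) - 1))) *
           Real.cos (π * ((k' (τ i)) : ℝ) * (2 * ((r i : ℕ) : ℝ) / (2 * (N:ℝ) - 1)))))
        = ∏ i : Fin n, ∑ x : Fin N, (cc N x *
          (Real.cos (π * ((k (σ i)) : ℝ) * (2 * ((x : ℕ) : ℝ) / (2 * (N:ℝ) - 1))) *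
           Real.cos (π * ((k' (τ i)) : ℝ) * (2 * ((x : ℕ) : ℝ) / (2 * (N:ℝ) - 1))))) :=
      hpi (fun i x => cc N x *
          (Real.cos (π * ((k (σ i)) : ℝ) * (2 * ((x : ℕ) : ℝ) / (2 * (N:ℝ) - 1))) *
           Real.cos (π * ((k' (τ i)) : ℝ) * (2 * ((x : ℕ) : ℝ) / (2 * (N:ℝ) - 1)))))
    rw [hfact]
    have hone : ∀ i : Fin n, ∑ x : Fin N, (cc N x *
          (Real.cos (π * ((k (σ i)) : ℝ) * (2 * ((x : ℕ) : ℝ) / (2 * (N:ℝ) - 1))) *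
           Real.cos (π * ((k' (τ i)) : ℝ) * (2 * ((x : ℕ) : ℝ) / (2 * (N:ℝ) - 1)))))
        = if k (σ i) = k' (τ i) then (2*(N:ℝ)-1)/4 * (cc N (k (σ i)))⁻¹ else 0 :=
      fun i => oneD N hN (k (σ i)) (k' (τ i)) (hkb _) (hk'b _)
    rw [Finset.prod_congr rfl fun i _ => hone i]
    rw [Fintype.prod_ite_zero]
    have hcond : (∀ i : Fin n, k (σ i) = k' (τ i)) ↔ k ∘ σ = k' ∘ τ :=
      ⟨funext, fun h i => congrFun h i⟩
    have hval : ∏ i : Fin n, ((2*(N:ℝ)-1)/4 * (cc N (k (σ i)))⁻¹)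
        = (c/4) ^ n * (∏ i : Fin n, cc N (k i))⁻¹ := by
      rw [Finset.prod_mul_distrib, Finset.prod_const,
        Equiv.prod_comp σ (fun i => (cc N (k i))⁻¹), Finset.prod_inv_distrib]
      simp [hc]
    by_cases hcase : k ∘ σ = k' ∘ τ
    · rw [if_pos (hcond.mpr hcase), if_pos hcase, hval, one_mul]
    · rw [if_neg (fun h => hcase (hcond.mp h)), if_neg hcase, zero_mul]
  rw [hfull]
  have hsum2 : ∑ σ : Equiv.Perm (Fin n), ∑ τ : Equiv.Perm (Fin n),
        (if k ∘ σ = k' ∘ τ then (1:ℝ) else 0) *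
          ((c/4) ^ n * (∏ i : Fin n, cc N (k i))⁻¹)
      = (if k = k' then ((n.factorial : ℕ) : ℝ) * Hstab k else 0) *
          ((c/4) ^ n * (∏ i : Fin n, cc N (k i))⁻¹) := by
    rw [← pair_count k k' (fun i j hij => hk i j hij) (fun i j hij => hk' i j hij)]
    rw [Finset.sum_mul]
    apply Finset.sum_congr rfl
    intro σ _
    rw [Finset.sum_mul]
  rw [hsum2]
  have hccprod : (∏ i : Fin n, cc N (k i)) ≠ 0 :=
    Finset.prod_ne_zero_iff.mpr fun i _ => cc_ne_zero N (k i)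
  have hfact0 : ((n.factorial : ℕ) : ℝ) ≠ 0 := by positivity
  by_cases hkk : k = k'
  · rw [if_pos hkk, if_pos hkk]
    field_simp
  · rw [if_neg hkk, if_neg hkk]
    ring
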